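/- If a Banach space X has the Daugavet property, then the norm of X is extremely rough, i.e., for every u ∈ S_X, limsup_{‖h‖→0} (‖u+h‖ + ‖u−h‖ − 2)/‖h‖ = 2. In particular, the norm of X is not Fréchet differentiable at any point of S_X. -/

import Mathlib

open Filter Metric

def DaugavetProperty (X : Type*) [NormedAddCommGroup X] [NormedSpace ℝ X] : Prop :=
  ∀ T : X →L[ℝ] X, (∃ (f : X →L[ℝ] ℝ) (y : X), T = f.smulRight y) →
    ‖ContinuousLinearMap.id ℝ X + T‖ = 1 + ‖T‖

/-- The roughness `η(X, u)` of the norm of `X` at `u`: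
`limsup_{‖h‖ → 0} (‖u + h‖ + ‖u - h‖ - 2) / ‖h‖`. -/
noncomputable def roughness {X : Type*} [NormedAddCommGroup X] (u : X) : ℝ :=
  Filter.limsup (fun h : X => (‖u + h‖ + ‖u - h‖ - 2) / ‖h‖) (nhdsWithin 0 {(0 : X)}ᶜ)

/-- From the Daugavet property: for every norm-one functional `f` and every `ε`, there is a
point `y` of the unit ball in the slice `{y : f y > 1 - ε}` which is almost at distance `2`
from `u`. -/
lemma daugavet_slice {X : Type*} [NormedAddCommGroup X] [NormedSpace ℝ X]
    (hX : DaugavetProperty X) {u : X} (hu : ‖u‖ = 1)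
    (f : X →L[ℝ] ℝ) (hf : ‖f‖ = 1) {ε : ℝ} (hε : 0 < ε) (hε1 : ε < 1) :
    ∃ y : X, ‖y‖ ≤ 1 ∧ 1 - ε < f y ∧ 2 - ε < ‖y - u‖ := by
  set T : X →L[ℝ] X := f.smulRight (-u) with hT
  have hTn : ‖T‖ = 1 := by
    rw [hT, ContinuousLinearMap.norm_smulRight_apply, hf, norm_neg, hu, one_mul]
  have hD : ‖ContinuousLinearMap.id ℝ X + T‖ = 2 := by
    rw [hX T ⟨f, -u, rfl⟩, hTn]; norm_num
  have h2 : 2 - ε / 2 < ‖ContinuousLinearMap.id ℝ X + T‖ := by rw [hD]; linarith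
  obtain ⟨y0, hy0, hy0'⟩ := (ContinuousLinearMap.id ℝ X + T).exists_lt_apply_of_lt_opNorm h2
  have key : ∀ z : X, (ContinuousLinearMap.id ℝ X + T) z = z - f z • u := by
    intro z
    simp [hT, smul_neg, sub_eq_add_neg]
  set y : X := if 0 ≤ f y0 then y0 else -y0 with hy
  have hyn : ‖y‖ < 1 := by rw [hy]; split <;> simpa using hy0
  have hfy0 : f y = |f y0| := by
    rw [hy]; split
    · rw [abs_of_nonneg ‹_›]
    · rw [map_neg, abs_of_neg (lt_of_not_ge ‹_›)]
  have hbig : 2 - ε / 2 < ‖y - f y • u‖ := by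
    have hval : ‖y - f y • u‖ = ‖y0 - f y0 • u‖ := by
      rw [hy]; split
      · rfl
      · rw [map_neg]
        have : -y0 - (-(f y0)) • u = -(y0 - f y0 • u) := by
          rw [neg_smul, neg_sub]; abel
        rw [this, norm_neg]
    rw [hval, ← key y0]
    exact hy0'
  have hfy_nonneg : 0 ≤ f y := hfy0 ▸ abs_nonneg _
  have hfyabs : f y ≤ 1 := by
    have : |f y| ≤ 1 := by
      calc |f y| = ‖f y‖ := (Real.norm_eq_abs _).symm
        _ ≤ ‖f‖ * ‖y‖ := f.le_opNorm y
        _ ≤ 1 := by rw [hf, one_mul]; exact hyn.le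
    exact (le_abs_self _).trans this
  have hlow : 1 - ε / 2 < f y := by
    have hle : ‖y - f y • u‖ ≤ ‖y‖ + |f y| := by
      calc ‖y - f y • u‖ ≤ ‖y‖ + ‖f y • u‖ := norm_sub_le _ _
        _ = ‖y‖ + |f y| := by rw [norm_smul, Real.norm_eq_abs, hu, mul_one]
    have := hbig.trans_le hle
    rw [abs_of_nonneg hfy_nonneg] at this
    linarith [hyn.le]
  refine ⟨y, hyn.le, by linarith, ?_⟩
  have h3 : ‖f y • u - u‖ = 1 - f y := by
    have : f y • u - u = (f y - 1) • u := by rw [sub_smul, one_smul]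
    rw [this, norm_smul, Real.norm_eq_abs, hu, mul_one,
      abs_of_nonpos (by linarith : f y - 1 ≤ 0), neg_sub]
  have h4 : ‖y - f y • u‖ ≤ ‖y - u‖ + ‖f y • u - u‖ := by
    have : y - f y • u = (y - u) - (f y • u - u) := by abel
    rw [this]
    exact norm_sub_le _ _
  rw [h3] at h4
  linarith

/-- Frequently near `0`, the roughness quotient is at least `2 - ρ`. -/
lemma daugavet_freq {X : Type*} [NormedAddCommGroup X] [NormedSpace ℝ X]
    (hX : DaugavetProperty X) {u : X} (hu : ‖u‖ = 1) {ρ : ℝ} (hρ : 0 < ρ) (hρ1 : ρ ≤ 1) :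
    ∃ᶠ h in nhdsWithin 0 {(0 : X)}ᶜ, 2 - ρ ≤ (‖u + h‖ + ‖u - h‖ - 2) / ‖h‖ := by
  have hu0 : u ≠ 0 := by
    intro h; rw [h, norm_zero] at hu; norm_num at hu
  obtain ⟨f, hf, hfu'⟩ := exists_dual_vector ℝ u (norm_ne_zero_iff.mpr hu0)
  have hfu : f u = 1 := by rw [show f u = ‖u‖ from by exact_mod_cast hfu', hu]
  rw [(nhdsWithin_hasBasis Metric.nhds_basis_ball _).frequently_iff]
  intro δ hδ
  set t : ℝ := min (δ / 2) 1 with ht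
  have ht0 : 0 < t := lt_min (by linarith) one_pos
  have ht1 : t ≤ 1 := min_le_right _ _
  have htδ : t ≤ δ / 2 := min_le_left _ _
  set ε : ℝ := ρ * t / 4 with hεdef
  have hε0 : 0 < ε := by positivity
  have hε1 : ε < 1 := by nlinarith
  obtain ⟨y, hy1, hy2, hy3⟩ := daugavet_slice hX hu f hf hε0 hε1
  have hy0 : y ≠ 0 := by
    intro h; rw [h, map_zero] at hy2; nlinarith
  have hny : 0 < ‖y‖ := norm_pos_iff.mpr hy0
  have hnh : ‖t • y‖ ≤ t := by
    rw [norm_smul, Real.norm_eq_abs, abs_of_pos ht0]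
    nlinarith
  have hnh0 : 0 < ‖t • y‖ := by
    rw [norm_smul, Real.norm_eq_abs, abs_of_pos ht0]; positivity
  refine ⟨t • y, ⟨?_, ?_⟩, ?_⟩
  · rw [mem_ball_zero_iff]
    calc ‖t • y‖ ≤ t := hnh
      _ ≤ δ / 2 := htδ
      _ < δ := by linarith
  · simp only [Set.mem_compl_iff, Set.mem_singleton_iff]
    exact smul_ne_zero (ne_of_gt ht0) hy0
  · -- lower bound on ‖u + t • y‖
    have hA : 1 + t * (1 - ε) < ‖u + t • y‖ := by
      have h1 : f (u + t • y) = 1 + t * f y := by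
        rw [map_add, hfu, map_smul, smul_eq_mul]
      have h2 : f (u + t • y) ≤ ‖u + t • y‖ := by
        calc f (u + t • y) ≤ |f (u + t • y)| := le_abs_self _
          _ = ‖f (u + t • y)‖ := (Real.norm_eq_abs _).symm
          _ ≤ ‖f‖ * ‖u + t • y‖ := f.le_opNorm _
          _ = ‖u + t • y‖ := by rw [hf, one_mul]
      nlinarith
    -- lower bound on ‖u - t • y‖
    have hB : 1 + t - ε < ‖u - t • y‖ := by
      have h1 : ‖t • y - y‖ ≤ 1 - t := by
        have : t • y - y = -((1 - t) • y) := by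
          rw [sub_smul, one_smul, neg_sub]
        rw [this, norm_neg, norm_smul, Real.norm_eq_abs,
          abs_of_nonneg (by linarith : (0:ℝ) ≤ 1 - t)]
        nlinarith
      have h2 : ‖u - y‖ ≤ ‖u - t • y‖ + ‖t • y - y‖ := by
        have : u - y = (u - t • y) + (t • y - y) := by abel
        rw [this]; exact norm_add_le _ _
      have h3 : 2 - ε < ‖u - y‖ := by rw [norm_sub_rev]; exact hy3
      linarith
    have hN : 2 * t - ε * (1 + t) < ‖u + t • y‖ + ‖u - t • y‖ - 2 := by nlinarith
    rw [le_div_iff₀ hnh0]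
    have hρ2 : 0 ≤ 2 - ρ := by linarith
    calc (2 - ρ) * ‖t • y‖ ≤ (2 - ρ) * t := by nlinarith
      _ ≤ 2 * t - ε * (1 + t) := by rw [hεdef]; nlinarith
      _ ≤ ‖u + t • y‖ + ‖u - t • y‖ - 2 := hN.le

theorem stmt6 {X : Type*} [NormedAddCommGroup X] [NormedSpace ℝ X] [CompleteSpace X]
    (hX : DaugavetProperty X) :
    ∀ u : X, ‖u‖ = 1 →
      roughness u = 2 ∧ ¬ DifferentiableAt ℝ (fun x : X => ‖x‖) u := by
  intro u hu
  have hu0 : u ≠ 0 := by intro h; rw [h, norm_zero] at hu; norm_num at hu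
  haveI : Nontrivial X := nontrivial_of_ne u 0 hu0
  haveI : NeBot (nhdsWithin (0 : X) {(0 : X)}ᶜ) := Module.punctured_nhds_neBot ℝ X 0
  set G : X → ℝ := fun h => (‖u + h‖ + ‖u - h‖ - 2) / ‖h‖ with hG
  have hub : ∀ᶠ h in nhdsWithin (0 : X) {(0 : X)}ᶜ, G h ≤ 2 := by
    filter_upwards [eventually_mem_nhdsWithin] with h hh
    have hh0 : h ≠ 0 := hh
    have hn : 0 < ‖h‖ := norm_pos_iff.mpr hh0
    rw [hG]
    rw [div_le_iff₀ hn]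
    have h1 := norm_add_le u h
    have h2 := norm_sub_le u h
    nlinarith
  have hlbd : ∀ᶠ h in nhdsWithin (0 : X) {(0 : X)}ᶜ, (-2 : ℝ) ≤ G h := by
    filter_upwards [eventually_mem_nhdsWithin] with h hh
    have hh0 : h ≠ 0 := hh
    have hn : 0 < ‖h‖ := norm_pos_iff.mpr hh0
    rw [hG]
    rw [le_div_iff₀ hn]
    have h1 : ‖u‖ ≤ ‖u + h‖ + ‖h‖ := by
      calc ‖u‖ = ‖(u + h) - h‖ := by rw [add_sub_cancel_right]
        _ ≤ ‖u + h‖ + ‖h‖ := norm_sub_le _ _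
    have h2 : ‖u‖ ≤ ‖u - h‖ + ‖h‖ := by
      calc ‖u‖ = ‖(u - h) + h‖ := by rw [sub_add_cancel]
        _ ≤ ‖u - h‖ + ‖h‖ := norm_add_le _ _
    nlinarith
  have hbdd : IsBoundedUnder (· ≤ ·) (nhdsWithin (0 : X) {(0 : X)}ᶜ) G := ⟨2, hub⟩
  have hcob : IsCoboundedUnder (· ≤ ·) (nhdsWithin (0 : X) {(0 : X)}ᶜ) G :=
    IsBoundedUnder.isCoboundedUnder_le ⟨-2, hlbd⟩
  have hle : roughness u ≤ 2 := limsup_le_of_le hcob hub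
  have hge : (2 : ℝ) ≤ roughness u := by
    apply le_of_forall_pos_le_add
    intro ε hε
    have hρ0 : 0 < min ε 1 := lt_min hε one_pos
    have hfr := daugavet_freq hX hu hρ0 (min_le_right _ _)
    have : 2 - min ε 1 ≤ roughness u := le_limsup_of_frequently_le hfr hbdd
    have := min_le_left ε 1
    linarith
  have hr : roughness u = 2 := le_antisymm hle hge
  refine ⟨hr, ?_⟩
  intro hdiff
  obtain ⟨g', hg'⟩ := hdiff
  have hadd : HasFDerivAt (fun h : X => u + h) (ContinuousLinearMap.id ℝ X) 0 :=
    (hasFDerivAt_id (0 : X)).const_add u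
  have F1 : HasFDerivAt (fun h : X => ‖u + h‖)
      (g'.comp (ContinuousLinearMap.id ℝ X)) 0 :=
    HasFDerivAt.comp 0 (by simpa using hg') hadd
  have hsub : HasFDerivAt (fun h : X => u - h) (-(ContinuousLinearMap.id ℝ X)) 0 := by
    simpa using (hasFDerivAt_id (0 : X)).const_sub u
  have F2 : HasFDerivAt (fun h : X => ‖u - h‖)
      (g'.comp (-(ContinuousLinearMap.id ℝ X))) 0 :=
    HasFDerivAt.comp 0 (by simpa using hg') hsub
  have F3 : HasFDerivAt (fun h : X => ‖u + h‖ + ‖u - h‖)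
      (g'.comp (ContinuousLinearMap.id ℝ X) + g'.comp (-(ContinuousLinearMap.id ℝ X))) 0 :=
    F1.add F2
  have hzero : g'.comp (ContinuousLinearMap.id ℝ X)
      + g'.comp (-(ContinuousLinearMap.id ℝ X)) = 0 := by
    ext x; simp
  rw [hzero] at F3
  have hO : (fun h : X => ‖u + h‖ + ‖u - h‖ - 2) =o[nhds (0 : X)] fun h => h := by
    have := hasFDerivAt_iff_isLittleO_nhds_zero.mp F3
    simpa [hu, one_add_one_eq_two] using this
  have hc := hO.def (by norm_num : (0 : ℝ) < 1 / 2)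
  have hev : ∀ᶠ h in nhdsWithin (0 : X) {(0 : X)}ᶜ, G h ≤ 1 / 2 := by
    filter_upwards [nhdsWithin_le_nhds hc, eventually_mem_nhdsWithin] with h h1 h2
    have hh0 : h ≠ 0 := h2
    have hn : 0 < ‖h‖ := norm_pos_iff.mpr hh0
    rw [hG, div_le_iff₀ hn]
    calc ‖u + h‖ + ‖u - h‖ - 2 ≤ |‖u + h‖ + ‖u - h‖ - 2| := le_abs_self _
      _ = ‖‖u + h‖ + ‖u - h‖ - 2‖ := (Real.norm_eq_abs _).symm
      _ ≤ 1 / 2 * ‖h‖ := h1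
  have hcontr := ((daugavet_freq hX hu one_pos le_rfl).and_eventually hev).exists
  obtain ⟨h, hh1, hh2⟩ := hcontr
  rw [hG] at hh2
  linarith
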